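/- Let f : ℂ → ℂ be holomorphic on ℂ∖{0} with f(z) ≠ 0 for every z ≠ 0. Then there exist a unique integer n ∈ ℤ and a function H : ℂ → ℂ holomorphic on ℂ∖{0} such that f(z) = z^n · exp(H(z)) for all z ≠ 0 (where z^n denotes the integer power, i.e. zpow). -/

import Mathlib

open Complex

lemma entire_primitive (g : ℂ → ℂ) (hg : Differentiable ℂ g) :
    ∃ P : ℂ → ℂ, ∀ z : ℂ, HasDerivAt P (g z) z := by
  set c : ℕ → ℂ := fun n => (n.factorial : ℂ)⁻¹ * iteratedDeriv n g 0 with hc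
  have hsum : ∀ z : ℂ, HasSum (fun n => c n * z ^ n) (g z) := by
    intro z
    have h := Complex.hasSum_taylorSeries_of_entire hg 0 z
    convert h using 2 with n
    all_goals (try rfl)
    simp only [hc, smul_eq_mul, sub_zero]
    ring
  refine ⟨fun z => ∑' n, c n / (n + 1) * z ^ (n + 1), fun z => ?_⟩
  set R : ℝ := ‖z‖ + 1 with hR
  have hR0 : (0:ℝ) < R := by positivity
  have hu : Summable fun n => ‖c n * (R : ℂ) ^ n‖ :=
    summable_norm_iff.mpr (hsum (R : ℂ)).summable
  have hterm : ∀ (n : ℕ) (y : ℂ), HasDerivAt (fun w => c n / (n + 1) * w ^ (n + 1))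
      (c n * y ^ n) y := by
    intro n y
    have h := (hasDerivAt_pow (n + 1) y).const_mul (c n / ((n : ℂ) + 1))
    convert h using 1
    all_goals (try rfl)
    have hne : ((n : ℂ) + 1) ≠ 0 := Nat.cast_add_one_ne_zero n
    push_cast
    field_simp
  have hzball : z ∈ Metric.ball (0:ℂ) R := by
    simp only [Metric.mem_ball, dist_zero_right, hR]
    linarith
  have key := hasDerivAt_tsum_of_isPreconnected hu (Metric.isOpen_ball (x := (0:ℂ)) (ε := R))
      ((convex_ball (0:ℂ) R).isPreconnected)
      (fun n y _ => hterm n y)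
      (fun n y hy => ?_) (Metric.mem_ball_self hR0) ?_ hzball
  · rwa [(hsum z).tsum_eq] at key
  · have hy' : ‖y‖ ≤ R := by
      simp only [Metric.mem_ball, dist_zero_right] at hy
      exact hy.le
    have h1 : ‖y ^ n‖ ≤ ‖(R:ℂ) ^ n‖ := by
      rw [norm_pow, norm_pow, Complex.norm_real, Real.norm_of_nonneg hR0.le]
      exact pow_le_pow_left₀ (norm_nonneg y) hy' n
    calc ‖c n * y ^ n‖ = ‖c n‖ * ‖y ^ n‖ := norm_mul _ _
      _ ≤ ‖c n‖ * ‖(R:ℂ) ^ n‖ := mul_le_mul_of_nonneg_left h1 (norm_nonneg _)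
      _ = ‖c n * (R:ℂ) ^ n‖ := (norm_mul _ _).symm
  · apply Summable.congr summable_zero
    intro n
    simp

lemma entire_log (F : ℂ → ℂ) (hF : Differentiable ℂ F) (hnz : ∀ z : ℂ, F z ≠ 0) :
    ∃ L : ℂ → ℂ, (∀ w : ℂ, Complex.exp (L w) = F w) ∧
      ∀ w : ℂ, HasDerivAt L (deriv F w / F w) w := by
  have hF' : Differentiable ℂ (deriv F) := by
    have := (hF.differentiableOn.analyticOnNhd isOpen_univ).deriv
    intro z
    exact (this z (Set.mem_univ z)).differentiableAt
  have hg : Differentiable ℂ fun z => deriv F z / F z := hF'.div hF hnz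
  obtain ⟨P, hP⟩ := entire_primitive _ hg
  have hh : ∀ z : ℂ, HasDerivAt (fun w => F w * Complex.exp (-P w)) 0 z := by
    intro z
    have h1 := (hF z).hasDerivAt.mul (((hP z).neg).cexp)
    convert h1 using 1
    all_goals (try rfl)
    have h2 : F z * (-(deriv F z / F z) * Complex.exp (-P z))
        = -(deriv F z * Complex.exp (-P z)) := by
      field_simp
      congr 1
      exact mul_div_cancel_left₀ _ (hnz z)
    rw [Pi.neg_apply, mul_comm (Complex.exp (-P z)) (-(deriv F z / F z)), h2]
    ring
  have hconst : ∀ z : ℂ, F z * Complex.exp (-P z) = F 0 * Complex.exp (-P 0) := by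
    intro z
    exact is_const_of_deriv_eq_zero (fun w => (hh w).differentiableAt)
      (fun w => (hh w).deriv) z 0
  have h0 : F 0 * Complex.exp (-P 0) ≠ 0 := mul_ne_zero (hnz 0) (Complex.exp_ne_zero _)
  refine ⟨fun w => P w + Complex.log (F 0 * Complex.exp (-P 0)), fun w => ?_, fun w => ?_⟩
  · rw [Complex.exp_add, Complex.exp_log h0, ← hconst w]
    rw [mul_comm (F w), ← mul_assoc, ← Complex.exp_add]
    simp
  · exact (hP w).add_const _

lemma int_eq_of_reps (n m : ℤ) (H G : ℂ → ℂ)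
    (hH : ∀ z : ℂ, z ≠ 0 → DifferentiableAt ℂ H z)
    (hG : ∀ z : ℂ, z ≠ 0 → DifferentiableAt ℂ G z)
    (heq : ∀ z : ℂ, z ≠ 0 →
      z ^ n * Complex.exp (H z) = z ^ m * Complex.exp (G z)) : m = n := by
  set k : ℤ := n - m with hkdef
  have hk : ∀ z : ℂ, z ≠ 0 → z ^ k = Complex.exp (G z - H z) := by
    intro z hz
    have h1 : z ^ k * z ^ m = z ^ n := by
      rw [← zpow_add₀ hz]; congr 1; omega
    have h2 := heq z hz
    have h3 : z ^ k * Complex.exp (H z) = Complex.exp (G z) := by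
      apply mul_left_cancel₀ (zpow_ne_zero m hz)
      linear_combination Complex.exp (H z) * h1 + h2
    rw [Complex.exp_sub, eq_div_iff (Complex.exp_ne_zero _)]
    exact h3
  have hne : ∀ t : ℝ, Complex.exp ((t : ℂ) * Complex.I) ≠ 0 := fun t => Complex.exp_ne_zero _
  have hcurve : ∀ t : ℝ, HasDerivAt (fun s : ℝ => Complex.exp ((s : ℂ) * Complex.I))
      (Complex.exp ((t : ℂ) * Complex.I) * Complex.I) t := by
    intro t
    have h0 : HasDerivAt (fun s : ℝ => (s : ℂ) * Complex.I) Complex.I t := by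
      have := (Complex.ofRealCLM.hasDerivAt (x := t)).mul_const Complex.I
      simpa using this
    exact h0.cexp
  set u : ℝ → ℂ := fun t => G (Complex.exp ((t : ℂ) * Complex.I))
      - H (Complex.exp ((t : ℂ) * Complex.I)) with hu
  have hudiff : ∀ t : ℝ, DifferentiableAt ℝ u t := by
    intro t
    have hc := (hcurve t).differentiableAt
    exact (((hG _ (hne t)).restrictScalars ℝ).comp t hc).sub
      (((hH _ (hne t)).restrictScalars ℝ).comp t hc)
  have hexp_u : ∀ t : ℝ, Complex.exp (u t) = Complex.exp ((k : ℂ) * ((t : ℂ) * Complex.I)) := by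
    intro t
    rw [Complex.exp_int_mul]
    exact (hk _ (hne t)).symm
  have hud : ∀ t : ℝ, HasDerivAt u ((k : ℂ) * Complex.I) t := by
    intro t
    have h1 : HasDerivAt (fun s : ℝ => Complex.exp (u s)) (Complex.exp (u t) * deriv u t) t :=
      (hudiff t).hasDerivAt.cexp
    have h2 : HasDerivAt (fun s : ℝ => Complex.exp ((k : ℂ) * ((s : ℂ) * Complex.I)))
        (Complex.exp ((k : ℂ) * ((t : ℂ) * Complex.I)) * ((k : ℂ) * Complex.I)) t := by
      have h0 : HasDerivAt (fun s : ℝ => (k : ℂ) * ((s : ℂ) * Complex.I))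
          ((k : ℂ) * Complex.I) t := by
        have := ((Complex.ofRealCLM.hasDerivAt (x := t)).mul_const Complex.I).const_mul (k : ℂ)
        simpa using this
      exact h0.cexp
    have heqf : (fun s : ℝ => Complex.exp (u s))
        = fun s : ℝ => Complex.exp ((k : ℂ) * ((s : ℂ) * Complex.I)) := funext hexp_u
    rw [heqf] at h1
    have h3 := h1.unique h2
    rw [← hexp_u t] at h3
    have h4 : deriv u t = (k : ℂ) * Complex.I := mul_left_cancel₀ (Complex.exp_ne_zero _) h3
    rw [← h4]
    exact (hudiff t).hasDerivAt
  have hv : ∀ t : ℝ, HasDerivAt (fun s : ℝ => u s - (k : ℂ) * Complex.I * (s : ℂ)) 0 t := by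
    intro t
    have h1 : HasDerivAt (fun s : ℝ => (k : ℂ) * Complex.I * (s : ℂ))
        ((k : ℂ) * Complex.I) t := by
      have := (Complex.ofRealCLM.hasDerivAt (x := t)).const_mul ((k : ℂ) * Complex.I)
      simpa using this
    have := (hud t).sub h1
    rw [sub_self] at this
    exact this
  have hconst := is_const_of_deriv_eq_zero (f := fun s : ℝ => u s - (k : ℂ) * Complex.I * (s : ℂ))
    (fun t => (hv t).differentiableAt) (fun t => (hv t).deriv) (2 * Real.pi) 0
  have huu : u (2 * Real.pi) = u 0 := by
    have h1 : ((2 * Real.pi : ℝ) : ℂ) * Complex.I = 2 * Real.pi * Complex.I := by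
      push_cast; ring
    simp only [hu, h1, Complex.exp_two_pi_mul_I, Complex.ofReal_zero, zero_mul, Complex.exp_zero]
  rw [huu] at hconst
  have hzero : (k : ℂ) * Complex.I * ((2 * Real.pi : ℝ) : ℂ) = 0 := by
    push_cast at hconst ⊢
    linear_combination -hconst
  have hk0 : (k : ℂ) = 0 := by
    have hpi : ((2 * Real.pi : ℝ) : ℂ) ≠ 0 := by
      simp [Real.pi_ne_zero]
    rcases mul_eq_zero.mp hzero with h | h
    · rcases mul_eq_zero.mp h with h' | h'
      · exact h'
      · exact absurd h' Complex.I_ne_zero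
    · exact absurd h hpi
  have : k = 0 := by exact_mod_cast hk0
  omega

/-- a nowhere-vanishing holomorphic function on `ℂ∖{0}` has the form
`z^n · exp(H z)` for a unique integer `n` and some holomorphic `H` on `ℂ∖{0}`. -/
theorem stmt_1 (f : ℂ → ℂ)
    (hf : ∀ z : ℂ, z ≠ 0 → DifferentiableAt ℂ f z)
    (hnz : ∀ z : ℂ, z ≠ 0 → f z ≠ 0) :
    ∃! n : ℤ, ∃ H : ℂ → ℂ,
      (∀ z : ℂ, z ≠ 0 → DifferentiableAt ℂ H z) ∧
      ∀ z : ℂ, z ≠ 0 → f z = z ^ n * Complex.exp (H z) := by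
  classical
  set F : ℂ → ℂ := fun w => f (Complex.exp w) with hFdef
  have hFdiff : Differentiable ℂ F := fun w =>
    (hf _ (Complex.exp_ne_zero w)).comp w (Complex.differentiable_exp w)
  have hFnz : ∀ w : ℂ, F w ≠ 0 := fun w => hnz _ (Complex.exp_ne_zero w)
  obtain ⟨L, hLexp, hL'⟩ := entire_log F hFdiff hFnz
  set c : ℂ := 2 * Real.pi * Complex.I with hcdef
  have hFper : ∀ w : ℂ, F (w + c) = F w := by
    intro w
    simp only [hFdef, hcdef, Complex.exp_add, Complex.exp_two_pi_mul_I, mul_one]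
  have hFder_per : ∀ w : ℂ, deriv F (w + c) = deriv F w := by
    intro w
    have hEq : (fun x => F (x + c)) = F := funext hFper
    calc deriv F (w + c) = deriv (fun y => F (y + c)) w := (deriv_comp_add_const F c w).symm
      _ = deriv F w := by rw [hEq]
  have hq : ∀ w : ℂ, HasDerivAt (fun x => L (x + c) - L x) 0 w := by
    intro w
    have h1 : HasDerivAt (fun x => L (x + c)) (deriv F (w + c) / F (w + c)) w := by
      have := HasDerivAt.comp_add_const w c (hL' (w + c))
      exact this
    have h2 := h1.sub (hL' w)
    rw [hFper, hFder_per, sub_self] at h2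
    exact h2
  have hqconst : ∀ w : ℂ, L (w + c) - L w = L (0 + c) - L 0 := fun w =>
    is_const_of_deriv_eq_zero (fun x => (hq x).differentiableAt) (fun x => (hq x).deriv) w 0
  have hexpq : Complex.exp (L (0 + c) - L 0) = 1 := by
    rw [Complex.exp_sub, hLexp, hLexp, hFper 0]
    exact div_self (hFnz 0)
  obtain ⟨n, hn⟩ := Complex.exp_eq_one_iff.mp hexpq
  have hLper : ∀ w : ℂ, L (w + c) = L w + n * c := by
    intro w
    have h1 := hqconst w
    rw [hn] at h1
    rw [hcdef]
    linear_combination h1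
  set M : ℂ → ℂ := fun w => L w - n * w with hMdef
  have hLdiff : Differentiable ℂ L := fun w => (hL' w).differentiableAt
  have hMdiff : Differentiable ℂ M := hLdiff.sub (differentiable_id.const_mul _)
  have hMper : Function.Periodic M c := by
    intro w
    simp only [hMdef]
    rw [hLper]
    ring
  have hMexp : ∀ w w' : ℂ, Complex.exp w = Complex.exp w' → M w = M w' := by
    intro w w' h
    obtain ⟨j, hj⟩ := Complex.exp_eq_exp_iff_exists_int.mp h
    rw [hj, ← hcdef]
    exact (hMper.int_mul j) w'
  set H : ℂ → ℂ := fun z => M (Complex.log z) with hHdef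
  have hHval : ∀ z : ℂ, z ≠ 0 → ∀ w : ℂ, Complex.exp w = z → H z = M w := by
    intro z hz w hw
    exact hMexp (Complex.log z) w (by rw [Complex.exp_log hz, hw])
  have hex : ∃ H' : ℂ → ℂ, (∀ z : ℂ, z ≠ 0 → DifferentiableAt ℂ H' z) ∧
      ∀ z : ℂ, z ≠ 0 → f z = z ^ n * Complex.exp (H' z) := by
    refine ⟨H, ?_, ?_⟩
    · intro z₀ hz₀
      set K : ℂ → ℂ := fun z => M (Complex.log (z / z₀) + Complex.log z₀) with hKdef
      have hKdiff : DifferentiableAt ℂ K z₀ := by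
        have h1 : DifferentiableAt ℂ (fun z : ℂ => z / z₀) z₀ := differentiableAt_id.div_const _
        have h2 : DifferentiableAt ℂ (fun z : ℂ => Complex.log (z / z₀)) z₀ :=
          h1.clog (by simp [div_self hz₀])
        exact (hMdiff _).comp z₀ (h2.add_const _)
      have hEv : H =ᶠ[nhds z₀] K := by
        have hopen : IsOpen {z : ℂ | z / z₀ ∈ Complex.slitPlane} :=
          Complex.isOpen_slitPlane.preimage (continuous_id.div_const z₀)
        have hmem : z₀ ∈ {z : ℂ | z / z₀ ∈ Complex.slitPlane} := by
          simp [div_self hz₀]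
        filter_upwards [hopen.mem_nhds hmem] with z hzs
        have hzs' : z / z₀ ∈ Complex.slitPlane := hzs
        have hz0 : z ≠ 0 := by
          intro h
          rw [h, zero_div] at hzs'
          exact (Complex.slitPlane_ne_zero hzs') rfl
        have hwexp : Complex.exp (Complex.log (z / z₀) + Complex.log z₀) = z := by
          rw [Complex.exp_add, Complex.exp_log (Complex.slitPlane_ne_zero hzs'),
            Complex.exp_log hz₀]
          field_simp
        exact hHval z hz0 _ hwexp
      exact (hEv.differentiableAt_iff).mpr hKdiff
    · intro z hz
      have h2 : Complex.exp (L (Complex.log z)) = f z := by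
        rw [hLexp]
        simp only [hFdef, Complex.exp_log hz]
      have h1 : H z = L (Complex.log z) - n * Complex.log z := rfl
      rw [h1, Complex.exp_sub, ← h2,
        show (z : ℂ) ^ n = Complex.exp ((n : ℂ) * Complex.log z) by
          rw [Complex.exp_int_mul, Complex.exp_log hz],
        mul_comm, div_mul_cancel₀ _ (Complex.exp_ne_zero _)]
  refine ⟨n, hex, ?_⟩
  rintro m ⟨G, hGdiff, hGval⟩
  obtain ⟨H', hH'diff, hH'val⟩ := hex
  exact int_eq_of_reps n m H' G hH'diff hGdiff
    (fun z hz => by rw [← hH'val z hz, ← hGval z hz])
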